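/- Gradient of the Bessel kernel: for every α > 0 and every z ∈ ℝ² with z ≠ 0, the Bessel kernel B_α is differentiable at z and ∇B_α(z) = −(z/(8π)) ∫₀^∞ t^{-2} exp(−|z|²/(4t) − αt) dt = −(1/(2π)) (z/|z|²) g_α(z). -/

import Mathlib

open MeasureTheory Real Set

/-- The Bessel kernel `B_α` on `ℝ² \ {0}`. -/
noncomputable def besselKernel (α : ℝ) (z : EuclideanSpace ℝ (Fin 2)) : ℝ :=
  (1 / (4 * π)) * ∫ t in Set.Ioi (0 : ℝ), t⁻¹ * Real.exp (-‖z‖ ^ 2 / (4 * t) - α * t)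

/-- `g_α(z) = ∫₀^∞ exp(−s − α|z|²/(4s)) ds`. -/
noncomputable def gAlpha (α : ℝ) (z : EuclideanSpace ℝ (Fin 2)) : ℝ :=
  ∫ s in Set.Ioi (0 : ℝ), Real.exp (-s - α * ‖z‖ ^ 2 / (4 * s))

private lemma exp_neg_div_le' {c t : ℝ} (hc : 0 < c) (ht : 0 < t) :
    Real.exp (-(c / t)) ≤ t / c := by
  have h1 : c / t ≤ Real.exp (c / t) :=
    le_trans (le_add_of_nonneg_right zero_le_one) (Real.add_one_le_exp _)
  rw [Real.exp_neg, inv_le_comm₀ (Real.exp_pos _) (div_pos ht hc), inv_div]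
  exact h1

private lemma inv_exp_bound' {c t : ℝ} (hc : 0 < c) (ht : 0 < t) :
    t⁻¹ * Real.exp (-(c / t)) ≤ 1 / c := by
  have h := exp_neg_div_le' hc ht
  calc t⁻¹ * Real.exp (-(c / t)) ≤ t⁻¹ * (t / c) :=
        mul_le_mul_of_nonneg_left h (by positivity)
    _ = 1 / c := by field_simp

private lemma sq_exp_bound' {c t : ℝ} (hc : 0 < c) (ht : 0 < t) :
    (t ^ 2)⁻¹ * Real.exp (-(c / t)) ≤ 4 / c ^ 2 := by
  have hsplit : Real.exp (-(c / t)) = Real.exp (-(c / (2 * t))) * Real.exp (-(c / (2 * t))) := by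
    rw [← Real.exp_add]; congr 1; field_simp; ring
  have h2 : Real.exp (-(c / (2 * t))) ≤ 2 * t / c := exp_neg_div_le' hc (by positivity)
  calc (t ^ 2)⁻¹ * Real.exp (-(c / t))
      ≤ (t ^ 2)⁻¹ * ((2 * t / c) * (2 * t / c)) := by
        rw [hsplit]
        exact mul_le_mul_of_nonneg_left
          (mul_le_mul h2 h2 (Real.exp_pos _).le (by positivity)) (by positivity)
    _ = 4 / c ^ 2 := by field_simp; ring

private lemma meas_aux (x α : ℝ) (c : ℝ) :
    AEStronglyMeasurable (fun t : ℝ => c * t⁻¹ * Real.exp (-x / (4 * t) - α * t))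
      (volume.restrict (Set.Ioi 0)) := by
  apply Measurable.aestronglyMeasurable
  fun_prop

private lemma meas_aux2 (x α : ℝ) :
    AEStronglyMeasurable (fun t : ℝ => -(1 / (4 * t ^ 2)) * Real.exp (-x / (4 * t) - α * t))
      (volume.restrict (Set.Ioi 0)) := by
  apply Measurable.aestronglyMeasurable
  fun_prop

private lemma integrable_of_expbound {α C : ℝ} (hα : 0 < α) {f : ℝ → ℝ}
    (hf : AEStronglyMeasurable f (volume.restrict (Set.Ioi 0)))
    (h : ∀ t ∈ Set.Ioi (0 : ℝ), ‖f t‖ ≤ C * Real.exp (-α * t)) :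
    IntegrableOn f (Set.Ioi 0) := by
  refine Integrable.mono' ((exp_neg_integrableOn_Ioi 0 hα).const_mul C) hf ?_
  exact (ae_restrict_iff' measurableSet_Ioi).2 (Filter.Eventually.of_forall h)

private lemma key_deriv {α r : ℝ} (hα : 0 < α) (hr : 0 < r) :
    HasDerivAt (fun x => ∫ t in Set.Ioi (0 : ℝ), t⁻¹ * Real.exp (-x / (4 * t) - α * t))
      (∫ t in Set.Ioi (0 : ℝ), -(1 / (4 * t ^ 2)) * Real.exp (-r / (4 * t) - α * t)) r := by
  have main := hasDerivAt_integral_of_dominated_loc_of_deriv_le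
    (F := fun x t => t⁻¹ * Real.exp (-x / (4 * t) - α * t))
    (F' := fun x t => -(1 / (4 * t ^ 2)) * Real.exp (-x / (4 * t) - α * t))
    (x₀ := r) (μ := volume.restrict (Set.Ioi 0))
    (bound := fun t => (64 / r ^ 2) * Real.exp (-α * t))
    (s := Metric.ball r (r / 2)) (Metric.ball_mem_nhds r (half_pos hr))
    (Filter.Eventually.of_forall fun x => by
      simpa using meas_aux x α 1)
    ?_ (meas_aux2 r α) ?_
    ((exp_neg_integrableOn_Ioi 0 hα).const_mul _) ?_
  · exact main.2
  · -- integrability of F r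
    apply integrable_of_expbound (C := 4 / r) hα (by simpa using meas_aux r α 1)
    intro t ht
    have ht' : (0 : ℝ) < t := ht
    have hsplit : Real.exp (-r / (4 * t) - α * t)
        = Real.exp (-(r / 4 / t)) * Real.exp (-α * t) := by
      rw [← Real.exp_add]; congr 1; field_simp; ring
    have hb := inv_exp_bound' (c := r / 4) (by positivity) ht'
    show ‖t⁻¹ * Real.exp (-r / (4 * t) - α * t)‖ ≤ 4 / r * Real.exp (-α * t)
    rw [Real.norm_eq_abs, abs_of_nonneg (by positivity), hsplit, ← mul_assoc]
    exact mul_le_mul_of_nonneg_right (hb.trans (le_of_eq (one_div_div r 4)))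
      (Real.exp_pos _).le
  · -- bound for F'
    refine (ae_restrict_iff' measurableSet_Ioi).2 (Filter.Eventually.of_forall ?_)
    intro t ht x hx
    have ht' : (0 : ℝ) < t := ht
    have hxr : r / 2 < x := by
      have := abs_lt.1 (mem_ball_iff_norm.1 hx)
      linarith [this.1]
    have hsplit : Real.exp (-x / (4 * t) - α * t)
        = Real.exp (-(x / 4 / t)) * Real.exp (-α * t) := by
      rw [← Real.exp_add]; congr 1; field_simp; ring
    have hmono : Real.exp (-(x / 4 / t)) ≤ Real.exp (-(r / 8 / t)) := by
      apply Real.exp_le_exp.2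
      have : r / 8 / t ≤ x / 4 / t := (div_le_div_iff_of_pos_right ht').2 (by linarith)
      linarith
    have hb := sq_exp_bound' (c := r / 8) (by positivity) ht'
    show ‖-(1 / (4 * t ^ 2)) * Real.exp (-x / (4 * t) - α * t)‖
        ≤ 64 / r ^ 2 * Real.exp (-α * t)
    rw [Real.norm_eq_abs, abs_mul, abs_neg, abs_of_nonneg (by positivity),
      abs_of_nonneg (Real.exp_pos _).le, hsplit]
    calc 1 / (4 * t ^ 2) * (Real.exp (-(x / 4 / t)) * Real.exp (-α * t))
        ≤ 1 / (4 * t ^ 2) * (Real.exp (-(r / 8 / t)) * Real.exp (-α * t)) :=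
          mul_le_mul_of_nonneg_left
            (mul_le_mul_of_nonneg_right hmono (Real.exp_pos _).le) (by positivity)
      _ = (1 / 4) * ((t ^ 2)⁻¹ * Real.exp (-(r / 8 / t))) * Real.exp (-α * t) := by ring
      _ ≤ (1 / 4) * (4 / (r / 8) ^ 2) * Real.exp (-α * t) :=
          mul_le_mul_of_nonneg_right (mul_le_mul_of_nonneg_left hb (by norm_num))
            (Real.exp_pos _).le
      _ = 64 / r ^ 2 * Real.exp (-α * t) := by rw [div_pow]; field_simp; ring
  · -- differentiability in x
    refine (ae_restrict_iff' measurableSet_Ioi).2 (Filter.Eventually.of_forall ?_)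
    intro t ht x _
    have ht' : (0 : ℝ) < t := ht
    have h0 : HasDerivAt (fun y : ℝ => -(1 / (4 * t)) * y - α * t) (-(1 / (4 * t))) x := by
      simpa using ((hasDerivAt_id x).const_mul (-(1 / (4 * t)))).sub_const (α * t)
    have hfun : (fun y : ℝ => -y / (4 * t) - α * t)
        = fun y : ℝ => -(1 / (4 * t)) * y - α * t := by
      funext y; ring
    have h1 : HasDerivAt (fun y : ℝ => -y / (4 * t) - α * t) (-(1 / (4 * t))) x := by
      rw [hfun]; exact h0
    have h2 := (h1.exp).const_mul t⁻¹
    refine h2.congr_deriv ?_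
    field_simp

private lemma cov {α r : ℝ} (hα : 0 < α) (hr : 0 < r) :
    (∫ t in Set.Ioi (0 : ℝ), (t ^ 2)⁻¹ * Real.exp (-r / (4 * t) - α * t))
      = (4 / r) * ∫ s in Set.Ioi (0 : ℝ), Real.exp (-s - α * r / (4 * s)) := by
  have stepA : (∫ t in Set.Ioi (0 : ℝ), (t ^ 2)⁻¹ * Real.exp (-r / (4 * t) - α * t))
      = ∫ x in Set.Ioi (0 : ℝ), Real.exp (-(r * x) / 4 - α / x) := by
    rw [← integral_comp_rpow_Ioi (fun t => (t ^ 2)⁻¹ * Real.exp (-r / (4 * t) - α * t))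
      (p := -1) (by norm_num)]
    apply setIntegral_congr_fun measurableSet_Ioi
    intro x hx
    have hx' : (0 : ℝ) < x := hx
    have h1 : x ^ ((-1 : ℝ)) = x⁻¹ := Real.rpow_neg_one x
    have h2 : x ^ ((-1 : ℝ) - 1) = (x ^ 2)⁻¹ := by
      rw [show ((-1 : ℝ) - 1) = -((2 : ℕ) : ℝ) by norm_num, Real.rpow_neg hx'.le,
        Real.rpow_natCast]
    have h3 : -r / (4 * x⁻¹) - α * x⁻¹ = -(r * x) / 4 - α / x := by
      field_simp
    simp only [h1, h2, h3, smul_eq_mul, abs_neg, abs_one, inv_pow, inv_inv]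
    field_simp
  have stepB : (∫ s in Set.Ioi (0 : ℝ), Real.exp (-s - α * r / (4 * s)))
      = (4 / r)⁻¹ • ∫ x in Set.Ioi (0 : ℝ), Real.exp (-(r * x) / 4 - α / x) := by
    have key := integral_comp_mul_left_Ioi (fun x => Real.exp (-(r * x) / 4 - α / x)) 0
      (b := 4 / r) (by positivity)
    rw [mul_zero] at key
    have hfun : (∫ s in Set.Ioi (0 : ℝ), Real.exp (-s - α * r / (4 * s)))
        = ∫ s in Set.Ioi (0 : ℝ), Real.exp (-(r * (4 / r * s)) / 4 - α / (4 / r * s)) := by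
      apply setIntegral_congr_fun measurableSet_Ioi
      intro s hs
      have hs' : (0 : ℝ) < s := hs
      have h4 : -s - α * r / (4 * s) = -(r * (4 / r * s)) / 4 - α / (4 / r * s) := by
        field_simp
      simp only []
      rw [h4]
    rw [hfun]
    exact key
  rw [stepA, stepB, smul_eq_mul, ← mul_assoc, mul_inv_cancel₀ (by positivity), one_mul]

/-- Gradient of the Bessel kernel away from the origin. -/
theorem bessel_gradient (α : ℝ) (hα : 0 < α)
    (z : EuclideanSpace ℝ (Fin 2)) (hz : z ≠ 0) :
    HasGradientAt (besselKernel α)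
      ((-(1 / (8 * π)) *
          ∫ t in Set.Ioi (0 : ℝ), (t ^ 2)⁻¹ * Real.exp (-‖z‖ ^ 2 / (4 * t) - α * t)) • z)
      z ∧
    (-(1 / (8 * π)) *
        ∫ t in Set.Ioi (0 : ℝ), (t ^ 2)⁻¹ * Real.exp (-‖z‖ ^ 2 / (4 * t) - α * t)) • z =
      (-(1 / (2 * π)) * (gAlpha α z / ‖z‖ ^ 2)) • z := by
  have hz' : 0 < ‖z‖ := norm_pos_iff.mpr hz
  have hr : 0 < ‖z‖ ^ 2 := by positivity
  have hF := key_deriv (r := ‖z‖ ^ 2) hα hr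
  have hD : (∫ t in Set.Ioi (0 : ℝ), -(1 / (4 * t ^ 2)) * Real.exp (-‖z‖ ^ 2 / (4 * t) - α * t))
      = -(1 / 4) * ∫ t in Set.Ioi (0 : ℝ), (t ^ 2)⁻¹ * Real.exp (-‖z‖ ^ 2 / (4 * t) - α * t) := by
    rw [← integral_const_mul]
    apply setIntegral_congr_fun measurableSet_Ioi
    intro t _
    simp only []
    ring
  rw [hD] at hF
  have hnsq : HasFDerivAt (fun w : EuclideanSpace ℝ (Fin 2) => ‖w‖ ^ 2)
      (2 • (innerSL ℝ z)) z := by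
    simpa using (hasFDerivAt_id z).norm_sq
  have hcomp : HasFDerivAt (besselKernel α)
      ((1 / (4 * π)) • (((-(1 / 4) *
        ∫ t in Set.Ioi (0 : ℝ), (t ^ 2)⁻¹ * Real.exp (-‖z‖ ^ 2 / (4 * t) - α * t))) •
        (2 • innerSL ℝ z))) z := by
    have h1 := hF.comp_hasFDerivAt z hnsq
    exact h1.const_mul (1 / (4 * π))
  constructor
  · rw [hasGradientAt_iff_hasFDerivAt]
    refine hcomp.congr_fderiv ?_
    apply ContinuousLinearMap.ext
    intro v
    simp only [InnerProductSpace.toDual_apply_apply, real_inner_smul_left,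
      ContinuousLinearMap.smul_apply, innerSL_apply_apply, smul_eq_mul]
    ring
  · have hcov := cov (r := ‖z‖ ^ 2) hα hr
    rw [gAlpha]
    congr 1
    rw [hcov]
    field_simp
    ring
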